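/- Let a₁/q₁ < a₂/q₂ be consecutive Farey fractions of order Q with q₁ < q₂ and ⌊(Q+q₁)/q₂⌋ = 2. Set q₃ = 2q₂ − q₁ and a₃ = 2a₂ − a₁. Then it is impossible that both h(a₁/q₁) ≤ Q and h(a₃/q₃) ≤ Q hold. -/

import Mathlib

/-- `a₁/q₁ < a₂/q₂` are consecutive elements of the Farey sequence of order `Q`. -/
def FareyConsec (Q a₁ q₁ a₂ q₂ : ℤ) : Prop :=
  0 < q₁ ∧ q₁ ≤ Q ∧ 0 < q₂ ∧ q₂ ≤ Q ∧ 0 ≤ a₁ ∧ a₁ ≤ q₁ ∧ 0 ≤ a₂ ∧ a₂ ≤ q₂ ∧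
  Int.gcd a₁ q₁ = 1 ∧ Int.gcd a₂ q₂ = 1 ∧ (a₁ : ℚ) / q₁ < (a₂ : ℚ) / q₂ ∧
  ∀ c d : ℤ, 0 < d → d ≤ Q → ¬((a₁ : ℚ) / q₁ < (c : ℚ) / d ∧ (c : ℚ) / d < (a₂ : ℚ) / q₂)

/-- Consecutive Farey fractions are unimodular: `a₂ q₁ - a₁ q₂ = 1`. -/
lemma farey_unimodular (Q a₁ q₁ a₂ q₂ : ℤ)
    (hcons : FareyConsec Q a₁ q₁ a₂ q₂) (hq : q₁ < q₂) :
    a₂ * q₁ - a₁ * q₂ = 1 := by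
  obtain ⟨hq₁, hq₁Q, hq₂, hq₂Q, ha₁, ha₁q, ha₂, ha₂q, hg₁, hg₂, hlt, hbet⟩ := hcons
  -- Bezout for a₁, q₁
  obtain ⟨u, v, huv⟩ := Int.isCoprime_iff_gcd_eq_one.mpr hg₁
  -- we seek c, d with c*q₁ - a₁*d = 1 and Q - q₁ < d ≤ Q
  set d₀ : ℤ := -u with hd₀
  have hcd₀ : v * q₁ - a₁ * d₀ = 1 := by rw [hd₀]; linarith [huv]
  set r : ℤ := (Q - d₀) % q₁ with hr
  have hr0 : 0 ≤ r := Int.emod_nonneg _ (by omega)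
  have hr1 : r < q₁ := Int.emod_lt_of_pos _ hq₁
  set d : ℤ := Q - r with hd
  set t : ℤ := (Q - d₀) / q₁ with ht
  have hdt : d = d₀ + q₁ * t := by
    have h := Int.mul_ediv_add_emod (Q - d₀) q₁
    rw [← ht, ← hr] at h
    omega
  set c : ℤ := v + a₁ * t with hc
  have hcd : c * q₁ - a₁ * d = 1 := by
    rw [hc, hdt]; ring_nf; linarith [hcd₀]
  have hdpos : 0 < d := by omega
  have hdQ : d ≤ Q := by omega
  have hdlow : Q - q₁ < d := by omega
  -- a₁/q₁ < c/d
  have hq₁Q' : (0 : ℚ) < (q₁ : ℚ) := by exact_mod_cast hq₁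
  have hdQ' : (0 : ℚ) < (d : ℚ) := by exact_mod_cast hdpos
  have hq₂Q' : (0 : ℚ) < (q₂ : ℚ) := by exact_mod_cast hq₂
  have h1 : (a₁ : ℚ) / q₁ < (c : ℚ) / d := by
    rw [div_lt_div_iff₀ hq₁Q' hdQ']
    have : (a₁ : ℤ) * d < c * q₁ := by linarith [hcd]
    exact_mod_cast this
  have h2 : ¬ ((c : ℚ) / d < (a₂ : ℚ) / q₂) := fun h => hbet c d hdpos hdQ ⟨h1, h⟩
  have h3 : (a₂ : ℚ) / q₂ ≤ (c : ℚ) / d := le_of_not_gt h2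
  have hE : 0 ≤ c * q₂ - a₂ * d := by
    rw [div_le_div_iff₀ hq₂Q' hdQ'] at h3
    have : (a₂ : ℤ) * d ≤ c * q₂ := by exact_mod_cast h3
    linarith
  have hD : 1 ≤ a₂ * q₁ - a₁ * q₂ := by
    rw [div_lt_div_iff₀ hq₁Q' hq₂Q'] at hlt
    have : (a₁ : ℤ) * q₂ < a₂ * q₁ := by exact_mod_cast hlt
    omega
  set D : ℤ := a₂ * q₁ - a₁ * q₂ with hDdef
  set E : ℤ := c * q₂ - a₂ * d with hEdef
  have hkey : q₂ = q₁ * E + d * D := by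
    rw [hDdef, hEdef]; linear_combination (-q₂) * hcd
  by_contra hne
  have hD2 : 2 ≤ D := by omega
  rcases eq_or_lt_of_le hE with hE0 | hE1
  · -- E = 0 : then q₂ = d * D, and D ∣ a₂, D ∣ q₂ forces D = 1
    have hq₂dD : q₂ = d * D := by rw [← hE0] at hkey; linarith
    have hcq : c * q₂ = a₂ * d := by omega
    have hcDa : c * D = a₂ := by
      have : (c * D) * d = a₂ * d := by rw [← hcq, hq₂dD]; ring
      exact mul_right_cancel₀ (by omega) this
    have hDa : D ∣ a₂ := ⟨c, by linarith [hcDa]⟩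
    have hDq : D ∣ q₂ := ⟨d, by linarith [hq₂dD]⟩
    have : D ∣ (Int.gcd a₂ q₂ : ℤ) := Int.dvd_coe_gcd hDa hDq
    rw [hg₂] at this
    have := Int.le_of_dvd one_pos this
    omega
  · -- E ≥ 1, D ≥ 2 : q₂ ≥ q₁ + 2d > q₁ + 2(Q - q₁) ≥ 2q₂ - q₁, contradiction
    have h1E : 1 ≤ E := hE1
    have hdD : 2 * d ≤ d * D := by nlinarith
    have hq₁E : q₁ ≤ q₁ * E := by nlinarith
    omega

theorem stmt_13 (Q a₁ q₁ a₂ q₂ a₃ q₃ ab₁ ab₃ : ℤ) (hQ : 3 ≤ Q)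
    (hcons : FareyConsec Q a₁ q₁ a₂ q₂)
    (ha₁ : 0 < a₁) (ha₁q : a₁ < q₁) (ha₂ : 0 < a₂) (ha₂q : a₂ < q₂)
    (hq : q₁ < q₂) (hnu : (Q + q₁) / q₂ = 2)
    (hq₃ : q₃ = 2 * q₂ - q₁) (ha₃ : a₃ = 2 * a₂ - a₁)
    (hi1 : 1 ≤ ab₁) (hi2 : ab₁ < q₁) (hinv1 : a₁ * ab₁ ≡ 1 [ZMOD q₁])
    (hj1 : 1 ≤ ab₃) (hj2 : ab₃ < q₃) (hinv3 : a₃ * ab₃ ≡ 1 [ZMOD q₃]) :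
    ¬(q₁ + a₁ + ab₁ ≤ Q ∧ q₃ + a₃ + ab₃ ≤ Q) := by
  obtain ⟨hq₁, hq₁Q, hq₂, hq₂Q, _, _, _, _, hg₁, hg₂, hlt, hbet⟩ := hcons
  have huni : a₂ * q₁ - a₁ * q₂ = 1 := farey_unimodular Q a₁ q₁ a₂ q₂
    ⟨hq₁, hq₁Q, hq₂, hq₂Q, by omega, by omega, by omega, by omega, hg₁, hg₂, hlt, hbet⟩ hq
  rintro ⟨h1, h3⟩
  -- from the floor condition: 2 q₂ ≤ Q + q₁ < 3 q₂
  have hfloor : 2 * q₂ ≤ Q + q₁ ∧ Q + q₁ < 3 * q₂ := by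
    have hmod0 : 0 ≤ (Q + q₁) % q₂ := Int.emod_nonneg _ (by omega)
    have hmod1 : (Q + q₁) % q₂ < q₂ := Int.emod_lt_of_pos _ hq₂
    have := Int.mul_ediv_add_emod (Q + q₁) q₂
    rw [hnu] at this
    omega
  have hq₂₃ : q₂ < q₃ := by omega
  -- a₃ q₂ - a₂ q₃ = 1
  have h33 : a₃ * q₂ - a₂ * q₃ = 1 := by
    rw [ha₃, hq₃]; linear_combination huni
  -- ab₃ = q₂, since q₂ is also an inverse of a₃ mod q₃
  have hdvd1 : q₃ ∣ 1 - a₃ * ab₃ := Int.modEq_iff_dvd.mp hinv3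
  have hdvd2 : q₃ ∣ a₃ * (q₂ - ab₃) := by
    have : a₃ * (q₂ - ab₃) = (a₃ * q₂ - 1) + (1 - a₃ * ab₃) := by ring
    rw [this]
    exact dvd_add ⟨a₂, by linarith [h33]⟩ hdvd1
  have hcop : IsCoprime q₃ a₃ := ⟨-a₂, q₂, by linarith [h33]⟩
  have hdvd3 : q₃ ∣ q₂ - ab₃ := hcop.dvd_of_dvd_mul_left hdvd2
  have hab₃ : ab₃ = q₂ := by
    by_contra h0
    have habs : |q₂ - ab₃| < q₃ := abs_lt.mpr ⟨by omega, by omega⟩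
    have hle := Int.le_of_dvd (abs_pos.mpr (by omega)) ((dvd_abs _ _).mpr hdvd3)
    omega
  -- now h3 : q₃ + a₃ + q₂ ≤ Q < 3 q₂ - q₁, so a₁ ≥ 2 a₂ + 1
  have ha12 : 2 * a₂ + 1 ≤ a₁ := by omega
  -- but a₂ q₁ = a₁ q₂ + 1 ≥ (2a₂+1) q₂ + 1 > a₂ q₂ > a₂ q₁, contradiction
  nlinarith [mul_lt_mul_of_pos_left hq ha₂, mul_le_mul_of_nonneg_right ha12 (le_of_lt hq₂),
    mul_pos ha₂ hq₂]
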